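/- arXiv:0806.1902 — 2 statements merged into one kernel-verified Lean document; each statement's English description precedes it below -/
import Mathlib

section
/- (Osgood-type uniqueness lemma.) Let T > 0, let f ∈ L¹(0,T) with f ≥ 0 a.e., let K ≥ 0 and C > 0, and let y : [0,T] → [0,∞) be continuous with y(0) = 0 and y(t) ≤ C ∫₀ᵗ f(s) y(s) ( |ln y(s)| + K ) ds for all t ∈ [0,T], where the integrand is interpreted as 0 at points where y(s) = 0. Then y(t) = 0 for all t ∈ [0,T]. -/
open MeasureTheory Set
open scoped ENNReal NNReal

-- monotonicity of g(w) = w*(|log w| + K) on [0, exp(-1)]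
lemma osgood_aux_mono (K : ℝ) (hK : 0 ≤ K) :
    MonotoneOn (fun w : ℝ => w * (|Real.log w| + K)) (Icc 0 (Real.exp (-1))) := by
  have h1 : ∀ w ∈ Icc (0:ℝ) (Real.exp (-1)), w * (|Real.log w| + K) = K * w - w * Real.log w := by
    intro w hw
    rcases eq_or_lt_of_le hw.1 with h | h
    · simp [← h]
    · have : Real.log w ≤ -1 := by
        calc Real.log w ≤ Real.log (Real.exp (-1)) := Real.log_le_log h hw.2
        _ = -1 := Real.log_exp _
      rw [abs_of_nonpos (by linarith)]
      ring
  have h2 : MonotoneOn (fun w : ℝ => K * w - w * Real.log w) (Icc 0 (Real.exp (-1))) := by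
    apply monotoneOn_of_deriv_nonneg (convex_Icc _ _)
    · exact (continuous_const.mul continuous_id).sub Real.continuous_mul_log |>.continuousOn
    · intro x hx
      rw [interior_Icc] at hx
      exact ((differentiableAt_id.const_mul K).sub
        ((Real.hasDerivAt_mul_log (ne_of_gt hx.1)).differentiableAt)).differentiableWithinAt
    · intro x hx
      rw [interior_Icc] at hx
      have hd : deriv (fun w : ℝ => K * w - w * Real.log w) x = K - (Real.log x + 1) := by
        rw [deriv_fun_sub ((differentiableAt_fun_id.const_mul K))
          ((Real.hasDerivAt_mul_log (ne_of_gt hx.1)).differentiableAt),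
          Real.deriv_mul_log (ne_of_gt hx.1)]
        rw [deriv_const_mul _ differentiableAt_fun_id]; simp
      rw [hd]
      have : Real.log x < -1 := by
        calc Real.log x < Real.log (Real.exp (-1)) := Real.log_lt_log hx.1 hx.2
        _ = -1 := Real.log_exp _
      linarith
  intro a ha b hb hab
  simp only
  rw [h1 a ha, h1 b hb]
  exact h2 ha hb hab


lemma osgood_F_cont (f₀ : ℝ → ℝ) (hi : Integrable f₀) :
    Continuous (fun x : ℝ => ∫ s in Ioc (0:ℝ) x, f₀ s) := by
  have h : (fun x : ℝ => ∫ s in Ioc (0:ℝ) x, f₀ s)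
      = (fun x : ℝ => ∫ s in (0:ℝ)..(max x 0), f₀ s) := by
    funext x
    rcases le_total x 0 with h | h
    · rw [max_eq_right h, intervalIntegral.integral_same, Ioc_eq_empty (by linarith),
        setIntegral_empty]
    · rw [max_eq_left h, intervalIntegral.integral_of_le h]
  rw [h]
  exact (intervalIntegral.continuous_primitive (fun a b => hi.intervalIntegrable) 0).comp
    (continuous_id.max continuous_const)

lemma osgood_F_mono (f₀ : ℝ → ℝ) (h0 : ∀ s, 0 ≤ f₀ s) (hi : Integrable f₀) :
    Monotone (fun x : ℝ => ∫ s in Ioc (0:ℝ) x, f₀ s) := by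
  intro a b hab
  exact setIntegral_mono_set hi.integrableOn
    (Filter.Eventually.of_forall (fun s => h0 s))
    (HasSubset.Subset.eventuallyLE (Ioc_subset_Ioc_right hab))

lemma osgood_map (f₀ : ℝ → ℝ) (hm : Measurable f₀) (h0 : ∀ s, 0 ≤ f₀ s) (hi : Integrable f₀)
    (t : ℝ) (ht : 0 ≤ t) :
    Measure.map (fun x => ∫ s in Ioc (0:ℝ) x, f₀ s)
      ((volume.withDensity fun s => ENNReal.ofReal (f₀ s)).restrict (Ioc 0 t))
      = volume.restrict (Ioc 0 (∫ s in Ioc (0:ℝ) t, f₀ s)) := by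
  set F : ℝ → ℝ := fun x => ∫ s in Ioc (0:ℝ) x, f₀ s with hFdef
  have Fcont : Continuous F := osgood_F_cont f₀ hi
  have Fmono : Monotone F := osgood_F_mono f₀ h0 hi
  have hF0 : F 0 = 0 := by simp [hFdef]
  have hFnn : ∀ x, 0 ≤ F x := fun x =>
    setIntegral_nonneg measurableSet_Ioc (fun s _ => h0 s)
  set ν := (volume.withDensity fun s => ENNReal.ofReal (f₀ s)).restrict (Ioc 0 t) with hν
  have hνapp : ∀ E : Set ℝ, MeasurableSet E →
      ν E = ∫⁻ s in E ∩ Ioc 0 t, ENNReal.ofReal (f₀ s) := by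
    intro E hE
    rw [hν, Measure.restrict_apply hE, withDensity_apply _ (hE.inter measurableSet_Ioc)]
  have hofReal : ∀ τ : ℝ, ∫⁻ s in Ioc (0:ℝ) τ, ENNReal.ofReal (f₀ s) = ENNReal.ofReal (F τ) := by
    intro τ
    rw [hFdef]
    exact (ofReal_integral_eq_lintegral_ofReal hi.integrableOn
      (Filter.Eventually.of_forall (fun s => h0 s))).symm
  have hmapF : ∀ E : Set ℝ, MeasurableSet E →
      (Measure.map F ν) E = ν (F ⁻¹' E) := fun E hE =>
    Measure.map_apply Fcont.measurable hE
  -- finiteness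
  have hfin : IsFiniteMeasure (Measure.map F ν) := by
    constructor
    rw [hmapF univ MeasurableSet.univ]
    simp only [preimage_univ]
    rw [hνapp univ MeasurableSet.univ, univ_inter, hofReal]
    exact ENNReal.ofReal_lt_top
  refine @Measure.ext_of_Iic ℝ _ _ _ _ _ _ (Measure.map F ν) _ hfin (fun c => ?_)
  rw [hmapF _ measurableSet_Iic, hνapp _ (Fcont.measurable measurableSet_Iic)]
  rcases lt_or_ge c 0 with hc | hc
  · have h1 : F ⁻¹' Iic c ∩ Ioc 0 t = ∅ := by
      apply eq_empty_of_forall_notMem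
      intro s hs
      exact absurd (le_trans (hFnn s) hs.1) (not_le.mpr hc)
    have h2 : Iic c ∩ Ioc (0:ℝ) (F t) = ∅ := by
      apply eq_empty_of_forall_notMem
      intro s hs
      exact absurd (lt_of_lt_of_le hs.2.1 hs.1) (not_lt.mpr hc.le)
    rw [h1, Measure.restrict_apply measurableSet_Iic, h2]
    simp
  · -- c ≥ 0
    set Sc := {s : ℝ | s ∈ Icc 0 t ∧ F s ≤ c} with hSc
    have hScne : Sc.Nonempty := ⟨0, ⟨le_refl _, ht⟩, by rw [hF0]; exact hc⟩
    have hSccl : IsClosed Sc := by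
      have : Sc = Icc 0 t ∩ F ⁻¹' Iic c := rfl
      rw [this]
      exact isClosed_Icc.inter (isClosed_Iic.preimage Fcont)
    have hSccpt : IsCompact Sc := by
      have : Sc = Icc 0 t ∩ F ⁻¹' Iic c := rfl
      rw [this]
      exact isCompact_Icc.inter_right (isClosed_Iic.preimage Fcont)
    set τ := sSup Sc with hτ
    have hτmem : τ ∈ Sc := hSccpt.sSup_mem hScne
    have hτ0 : 0 ≤ τ := hτmem.1.1
    have hτt : τ ≤ t := hτmem.1.2
    have hτc : F τ ≤ c := hτmem.2
    have hE : F ⁻¹' Iic c ∩ Ioc 0 t = Ioc 0 τ := by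
      ext s
      constructor
      · rintro ⟨hs1, hs2⟩
        refine ⟨hs2.1, ?_⟩
        exact le_csSup hSccpt.bddAbove ⟨⟨hs2.1.le, hs2.2⟩, hs1⟩
      · rintro ⟨hs1, hs2⟩
        exact ⟨le_trans (Fmono hs2) hτc, hs1, le_trans hs2 hτt⟩
    have hFτ : F τ = min (F t) c := by
      refine le_antisymm (le_min (Fmono hτt) hτc) ?_
      by_contra hlt
      push_neg at hlt
      have hτlt : τ < t := by
        rcases eq_or_lt_of_le hτt with h | h
        · exfalso; rw [h] at hlt
          exact absurd (min_le_left (F t) c) (not_le.mpr hlt)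
        · exact h
      have hFτc : F τ < c := lt_of_lt_of_le hlt (min_le_right _ _)
      have hopen : IsOpen (F ⁻¹' Iio c) := isOpen_Iio.preimage Fcont
      rcases Metric.isOpen_iff.mp hopen τ hFτc with ⟨ε, hε, hball⟩
      set s := min (τ + ε / 2) t with hs
      have hsτ : τ < s := lt_min (by linarith) hτlt
      have hsmem : s ∈ Sc := by
        refine ⟨⟨le_trans hτ0 hsτ.le, min_le_right _ _⟩, ?_⟩
        have : s ∈ Metric.ball τ ε := by
          rw [Metric.mem_ball, Real.dist_eq, abs_of_pos (by linarith)]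
          have : s ≤ τ + ε / 2 := min_le_left _ _
          linarith
        exact (hball this).le
      exact absurd (le_csSup hSccpt.bddAbove hsmem) (not_le.mpr hsτ)
    rw [hE, hofReal, Measure.restrict_apply measurableSet_Iic]
    have : Iic c ∩ Ioc (0:ℝ) (F t) = Ioc 0 (min (F t) c) := by
      ext x; simp only [mem_inter_iff, mem_Ioc, mem_Iic, le_min_iff]; tauto
    rw [this, Real.volume_Ioc, hFτ]
    norm_num


lemma osgood_cov (f₀ : ℝ → ℝ) (hm : Measurable f₀) (h0 : ∀ s, 0 ≤ f₀ s) (hi : Integrable f₀)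
    (h : ℝ → ℝ) (hh : Continuous h) (t : ℝ) (ht : 0 ≤ t)
    (hmap : Measure.map (fun x => ∫ s in Ioc (0:ℝ) x, f₀ s)
      ((volume.withDensity fun s => ENNReal.ofReal (f₀ s)).restrict (Ioc 0 t))
      = volume.restrict (Ioc 0 (∫ s in Ioc (0:ℝ) t, f₀ s))) :
    ∫ s in Ioc (0:ℝ) t, f₀ s * h (∫ u in Ioc (0:ℝ) s, f₀ u)
      = ∫ u in Ioc (0:ℝ) (∫ s in Ioc (0:ℝ) t, f₀ s), h u := by
  set F : ℝ → ℝ := fun x => ∫ s in Ioc (0:ℝ) x, f₀ s with hFdef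
  have Fcont : Continuous F := osgood_F_cont f₀ hi
  have h1 : ∫ u in Ioc (0:ℝ) (F t), h u
      = ∫ x, h x ∂(Measure.map F ((volume.withDensity fun s => ENNReal.ofReal (f₀ s)).restrict (Ioc 0 t))) := by
    rw [hmap]
  rw [h1, integral_map Fcont.aemeasurable hh.aestronglyMeasurable.aemeasurable.aestronglyMeasurable]
  rw [restrict_withDensity measurableSet_Ioc]
  have hd : (fun s => ENNReal.ofReal (f₀ s)) = (fun s => ((f₀ s).toNNReal : ℝ≥0∞)) := rfl
  rw [hd, integral_withDensity_eq_integral_smul hm.real_toNNReal]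
  apply setIntegral_congr_fun measurableSet_Ioc
  intro s _
  simp only [NNReal.smul_def, smul_eq_mul]
  rw [Real.coe_toNNReal _ (h0 s)]

lemma osgood_ftc (Av c K b : ℝ) (hc : 0 < c) (hb : 0 ≤ b) :
    ∫ u in Ioc (0:ℝ) b, Av * Real.exp (-(c*u)) * Real.exp (K - Av * Real.exp (-(c*u)))
      = (1/c) * (Real.exp (K - Av * Real.exp (-(c*b))) - Real.exp (K - Av)) := by
  have key : ∀ u : ℝ, HasDerivAt (fun x => (1/c) * Real.exp (K - Av * Real.exp (-(c*x))))
      (Av * Real.exp (-(c*u)) * Real.exp (K - Av * Real.exp (-(c*u)))) u := by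
    intro u
    have h1 : HasDerivAt (fun x : ℝ => -(c*x)) (-c) u := by
      simpa using ((hasDerivAt_id u).const_mul c).fun_neg
    have h2 : HasDerivAt (fun x : ℝ => Real.exp (-(c*x))) (Real.exp (-(c*u)) * (-c)) u :=
      h1.exp
    have h3 : HasDerivAt (fun x : ℝ => K - Av * Real.exp (-(c*x)))
        (-(Av * (Real.exp (-(c*u)) * (-c)))) u := (h2.const_mul Av).neg.const_add K
    have h4 := (h3.exp.const_mul (1/c))
    refine h4.congr_deriv ?_
    field_simp
  rw [← intervalIntegral.integral_of_le hb,
    intervalIntegral.integral_eq_sub_of_hasDerivAt (fun u _ => key u) ?_]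
  · rw [mul_zero, neg_zero, Real.exp_zero, mul_one]
    ring
  · apply Continuous.intervalIntegrable
    continuity

/-- **Osgood-type uniqueness lemma.** Let `T > 0`, `f ∈ L¹(0,T)` with `f ≥ 0`
a.e., `K ≥ 0`, `C > 0`, and let `y : [0,T] → [0,∞)` be continuous with `y 0 = 0` and
`y t ≤ C ∫₀ᵗ f s · y s · (|ln (y s)| + K) ds` for all `t ∈ [0,T]`.  (The convention
`0 · |ln 0| = 0` holds automatically, since `Real.log 0 = 0`.)  Then `y ≡ 0` on `[0,T]`. -/
theorem osgood_uniqueness (T : ℝ) (hT : 0 < T) (f : ℝ → ℝ)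
    (hf_int : IntegrableOn f (Ioo 0 T))
    (hf_nonneg : ∀ᵐ s ∂(volume.restrict (Ioo 0 T)), 0 ≤ f s)
    (K C : ℝ) (hK : 0 ≤ K) (hC : 0 < C)
    (y : ℝ → ℝ) (hy_cont : ContinuousOn y (Icc 0 T))
    (hy_nonneg : ∀ t ∈ Icc (0 : ℝ) T, 0 ≤ y t) (hy0 : y 0 = 0)
    (hineq : ∀ t ∈ Icc (0 : ℝ) T,
      y t ≤ C * ∫ s in Ioc (0 : ℝ) t, f s * (y s * (|Real.log (y s)| + K))) :
    ∀ t ∈ Icc (0 : ℝ) T, y t = 0 := by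
  -- measurable nonnegative representative of f, extended by 0
  have haem : AEMeasurable f (volume.restrict (Ioo 0 T)) :=
    hf_int.aestronglyMeasurable.aemeasurable
  set g : ℝ → ℝ := haem.mk f with hg
  have hgm : Measurable g := haem.measurable_mk
  have hgae : f =ᵐ[volume.restrict (Ioo 0 T)] g := haem.ae_eq_mk
  set f₀ : ℝ → ℝ := (Ioo 0 T).indicator (fun s => max (g s) 0) with hf₀
  have hf₀m : Measurable f₀ := (hgm.max measurable_const).indicator measurableSet_Ioo
  have hf₀0 : ∀ s, 0 ≤ f₀ s := by
    intro s
    rw [hf₀]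
    by_cases h : s ∈ Ioo 0 T
    · rw [indicator_of_mem h]; exact le_max_right _ _
    · rw [indicator_of_notMem h]
  have hfeq : ∀ᵐ s ∂(volume.restrict (Ioo 0 T)), f s = f₀ s := by
    filter_upwards [hgae, hf_nonneg, ae_restrict_mem measurableSet_Ioo] with s h1 h2 h3
    rw [hf₀, indicator_of_mem h3, max_eq_left (h1 ▸ h2), ← h1]
  have hf₀int : Integrable f₀ := by
    rw [hf₀, integrable_indicator_iff measurableSet_Ioo]
    exact (hf_int.congr hgae).pos_part
  -- a.e. equality on subintervals
  have hfae : ∀ t ∈ Icc (0:ℝ) T, ∀ᵐ s ∂(volume.restrict (Ioc (0:ℝ) t)), f s = f₀ s := by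
    intro t htmem
    rw [ae_iff, Measure.restrict_apply' measurableSet_Ioc]
    have h1 : volume ({s | ¬ f s = f₀ s} ∩ Ioo 0 T) = 0 := by
      have := hfeq
      rw [ae_iff, Measure.restrict_apply' measurableSet_Ioo] at this
      exact this
    refine measure_mono_null (fun s hs => ?_) (measure_union_null h1 (measure_singleton t))
    rcases em (s ∈ Ioo 0 T) with h | h
    · exact Or.inl ⟨hs.1, h⟩
    · right
      have h2 : s = t := by
        rcases hs.2 with ⟨hs1, hs2⟩
        have hTs : T ≤ s := by
          by_contra hTs
          exact h ⟨hs1, lt_of_not_ge hTs⟩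
        linarith [htmem.2]
      exact h2 ▸ rfl
  have hint_eq : ∀ t ∈ Icc (0:ℝ) T,
      (∫ s in Ioc (0:ℝ) t, f s * (y s * (|Real.log (y s)| + K)))
      = ∫ s in Ioc (0:ℝ) t, f₀ s * (y s * (|Real.log (y s)| + K)) := by
    intro t htmem
    apply integral_congr_ae
    filter_upwards [hfae t htmem] with s hs
    rw [hs]
  -- primitive F
  set F : ℝ → ℝ := fun x => ∫ s in Ioc (0:ℝ) x, f₀ s with hF
  have Fcont : Continuous F := osgood_F_cont f₀ hf₀int
  have Fmono : Monotone F := osgood_F_mono f₀ hf₀0 hf₀int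
  have hFnn : ∀ x, 0 ≤ F x := fun x =>
    setIntegral_nonneg measurableSet_Ioc (fun s _ => hf₀0 s)
  set c : ℝ := 2 * C with hcdef
  have hc : 0 < c := by positivity
  -- the function w ↦ |w * log w| + K * w, a continuous version of the nonlinearity
  set φ : ℝ → ℝ := fun w => |w * Real.log w| + K * w with hφ
  have hφcont : Continuous φ := (Real.continuous_mul_log.abs).add (continuous_const.mul continuous_id)
  have hφeq : ∀ w : ℝ, 0 ≤ w → w * (|Real.log w| + K) = φ w := by
    intro w hw
    rw [hφ]
    simp only
    rw [abs_mul, abs_of_nonneg hw]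
    ring
  -- key comparison
  have key : ∀ A : ℝ, (K + 1) * Real.exp (c * F T) ≤ A →
      ∀ t ∈ Icc (0:ℝ) T, y t < Real.exp (K - A * Real.exp (-(c * F t))) := by
    intro A hA
    set v : ℝ → ℝ := fun x => Real.exp (K - A * Real.exp (-(c * F x))) with hv
    have vcont : Continuous v :=
      (continuous_const.sub (continuous_const.mul ((continuous_const.mul Fcont).neg.rexp))).rexp
    have hAe : ∀ x ∈ Icc (0:ℝ) T, K + 1 ≤ A * Real.exp (-(c * F x)) := by
      intro x hx
      have h1 : Real.exp (c * F x) ≤ Real.exp (c * F T) :=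
        Real.exp_le_exp.mpr (mul_le_mul_of_nonneg_left (Fmono hx.2) hc.le)
      have h2 : (K + 1) * Real.exp (c * F x) ≤ A := by
        calc (K + 1) * Real.exp (c * F x) ≤ (K + 1) * Real.exp (c * F T) :=
              mul_le_mul_of_nonneg_left h1 (by linarith)
        _ ≤ A := hA
      calc K + 1 = (K + 1) * Real.exp (c * F x) * Real.exp (-(c * F x)) := by
            rw [mul_assoc, ← Real.exp_add]; simp
      _ ≤ A * Real.exp (-(c * F x)) := mul_le_mul_of_nonneg_right h2 (Real.exp_pos _).le
    have hvsmall : ∀ x ∈ Icc (0:ℝ) T, v x ≤ Real.exp (-1) := by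
      intro x hx
      apply Real.exp_le_exp.mpr
      have := hAe x hx
      linarith
    by_contra hcon
    push_neg at hcon
    obtain ⟨t₁, ht₁, ht₁'⟩ := hcon
    set S : Set ℝ := {x | x ∈ Icc (0:ℝ) T ∧ v x - y x ≤ 0} with hS
    have hSne : S.Nonempty := ⟨t₁, ht₁, by linarith⟩
    have hScl : IsClosed S := by
      have : S = Icc (0:ℝ) T ∩ (fun x => v x - y x) ⁻¹' Iic 0 := rfl
      rw [this]
      exact ContinuousOn.preimage_isClosed_of_isClosed
        ((vcont.continuousOn).sub hy_cont) isClosed_Icc isClosed_Iic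
    have hScpt : IsCompact S :=
      (isCompact_Icc (a := (0:ℝ)) (b := T)).of_isClosed_subset hScl (fun x hx => hx.1)
    set τ : ℝ := sInf S with hτ
    have hτmem : τ ∈ S := hScpt.sInf_mem hSne
    have hτIcc : τ ∈ Icc (0:ℝ) T := hτmem.1
    have hvy : v τ ≤ y τ := by linarith [hτmem.2]
    have hτpos : 0 < τ := by
      rcases eq_or_lt_of_le hτIcc.1 with h | h
      · exfalso
        have : v 0 ≤ y 0 := h ▸ hvy
        rw [hy0] at this
        exact absurd this (not_le.mpr (Real.exp_pos _))
      · exact h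
    have hlt : ∀ s ∈ Ioo (0:ℝ) τ, y s ≤ v s := by
      intro s hs
      by_contra h
      push_neg at h
      have hsS : s ∈ S := ⟨⟨hs.1.le, le_trans hs.2.le hτIcc.2⟩, by linarith⟩
      exact absurd (csInf_le hScpt.bddBelow hsS) (not_le.mpr hs.2)
    -- integrability
    have hyae : AEStronglyMeasurable (fun s => φ (y s)) (volume.restrict (Ioo (0:ℝ) τ)) := by
      apply ContinuousOn.aestronglyMeasurable _ measurableSet_Ioo
      apply (hφcont.comp_continuousOn (hy_cont.mono _))
      intro x hx
      exact ⟨hx.1.le, le_trans hx.2.le hτIcc.2⟩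
    obtain ⟨M, hM⟩ := (isCompact_Icc (a := (0:ℝ)) (b := T)).exists_bound_of_continuousOn
      (hφcont.comp_continuousOn hy_cont)
    have hbd1 : ∀ᵐ s ∂(volume.restrict (Ioo (0:ℝ) τ)), ‖φ (y s)‖ ≤ M := by
      filter_upwards [ae_restrict_mem measurableSet_Ioo] with s hs
      exact hM s ⟨hs.1.le, le_trans hs.2.le hτIcc.2⟩
    have int1 : IntegrableOn (fun s => f₀ s * (y s * (|Real.log (y s)| + K))) (Ioo 0 τ) := by
      have h1 : IntegrableOn (fun s => φ (y s) * f₀ s) (Ioo 0 τ) :=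
        Integrable.bdd_mul (hf₀int.integrableOn) hyae hbd1
      apply h1.congr
      filter_upwards [ae_restrict_mem measurableSet_Ioo] with s hs
      rw [hφeq (y s) (hy_nonneg s ⟨hs.1.le, le_trans hs.2.le hτIcc.2⟩), mul_comm]
    set ψ : ℝ → ℝ := fun u => A * Real.exp (-(c * u)) * Real.exp (K - A * Real.exp (-(c * u)))
      with hψ
    have hψcont : Continuous ψ := by
      apply Continuous.mul
      · exact continuous_const.mul ((continuous_const.mul continuous_id).neg.rexp)
      · exact (continuous_const.sub (continuous_const.mul
          ((continuous_const.mul continuous_id).neg.rexp))).rexp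
    obtain ⟨M₂, hM₂⟩ := (isCompact_Icc (a := (0:ℝ)) (b := F T)).exists_bound_of_continuousOn
      (hψcont.continuousOn)
    have hbd2 : ∀ᵐ s ∂(volume.restrict (Ioo (0:ℝ) τ)), ‖ψ (F s)‖ ≤ M₂ := by
      filter_upwards [ae_restrict_mem measurableSet_Ioo] with s hs
      exact hM₂ (F s) ⟨hFnn s, Fmono (le_trans hs.2.le hτIcc.2)⟩
    have int2 : IntegrableOn (fun s => f₀ s * ψ (F s)) (Ioo 0 τ) := by
      have h1 : IntegrableOn (fun s => ψ (F s) * f₀ s) (Ioo 0 τ) :=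
        Integrable.bdd_mul (hf₀int.integrableOn)
          ((hψcont.comp Fcont).aestronglyMeasurable.restrict) hbd2
      apply h1.congr
      exact Filter.Eventually.of_forall (fun s => mul_comm _ _)
    -- pointwise comparison and the chain of inequalities
    have step2 : (∫ s in Ioc (0:ℝ) τ, f₀ s * (y s * (|Real.log (y s)| + K)))
        ≤ ∫ s in Ioc (0:ℝ) τ, f₀ s * ψ (F s) := by
      rw [integral_Ioc_eq_integral_Ioo, integral_Ioc_eq_integral_Ioo]
      apply setIntegral_mono_on int1 int2 measurableSet_Ioo
      intro s hs
      have hsIcc : s ∈ Icc (0:ℝ) T := ⟨hs.1.le, le_trans hs.2.le hτIcc.2⟩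
      have hys : y s ≤ v s := hlt s hs
      have h1 : y s * (|Real.log (y s)| + K) ≤ v s * (|Real.log (v s)| + K) :=
        osgood_aux_mono K hK
          ⟨hy_nonneg s hsIcc, le_trans hys (hvsmall s hsIcc)⟩
          ⟨(Real.exp_pos _).le, hvsmall s hsIcc⟩ hys
      have h2 : v s * (|Real.log (v s)| + K) = ψ (F s) := by
        rw [hv, hψ]
        simp only
        rw [Real.log_exp, abs_of_nonpos (by linarith [hAe s hsIcc])]
        ring
      calc f₀ s * (y s * (|Real.log (y s)| + K)) ≤ f₀ s * (v s * (|Real.log (v s)| + K)) :=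
            mul_le_mul_of_nonneg_left h1 (hf₀0 s)
      _ = f₀ s * ψ (F s) := by rw [h2]
    have step3 : (∫ s in Ioc (0:ℝ) τ, f₀ s * ψ (F s))
        = ∫ u in Ioc (0:ℝ) (F τ), ψ u :=
      osgood_cov f₀ hf₀m hf₀0 hf₀int ψ hψcont τ hτpos.le
        (osgood_map f₀ hf₀m hf₀0 hf₀int τ hτpos.le)
    have step4 : (∫ u in Ioc (0:ℝ) (F τ), ψ u)
        = (1/c) * (Real.exp (K - A * Real.exp (-(c * F τ))) - Real.exp (K - A)) :=
      osgood_ftc A c K (F τ) hc (hFnn τ)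
    have hchain : y τ ≤ C * ((1/c) * (v τ - Real.exp (K - A))) := by
      calc y τ ≤ C * ∫ s in Ioc (0:ℝ) τ, f s * (y s * (|Real.log (y s)| + K)) :=
            hineq τ hτIcc
      _ = C * ∫ s in Ioc (0:ℝ) τ, f₀ s * (y s * (|Real.log (y s)| + K)) := by
            rw [hint_eq τ hτIcc]
      _ ≤ C * ((1/c) * (v τ - Real.exp (K - A))) := by
            apply mul_le_mul_of_nonneg_left _ hC.le
            rw [← step4, ← step3]
            exact step2
    have hvpos : 0 < v τ := Real.exp_pos _
    have hexp : 0 < Real.exp (K - A) := Real.exp_pos _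
    have hfinal : C * ((1/c) * (v τ - Real.exp (K - A))) < v τ := by
      rw [hcdef]
      have hCC : C * (1 / (2*C)) = 1/2 := by field_simp
      calc C * ((1/(2*C)) * (v τ - Real.exp (K - A)))
          = (1/2) * (v τ - Real.exp (K - A)) := by
            rw [← mul_assoc, hCC]
      _ < v τ := by linarith
    linarith
  -- conclusion
  intro t htmem
  refine le_antisymm ?_ (hy_nonneg t htmem)
  by_contra hpos
  push_neg at hpos
  set A : ℝ := max ((K + 1) * Real.exp (c * F T)) ((K - Real.log (y t)) * Real.exp (c * F t))
    with hAdef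
  have h := key A (le_max_left _ _) t htmem
  have h2 : K - Real.log (y t) ≤ A * Real.exp (-(c * F t)) := by
    calc K - Real.log (y t)
        = (K - Real.log (y t)) * Real.exp (c * F t) * Real.exp (-(c * F t)) := by
          rw [mul_assoc, ← Real.exp_add]; simp
    _ ≤ A * Real.exp (-(c * F t)) :=
          mul_le_mul_of_nonneg_right (le_max_right _ _) (Real.exp_pos _).le
  have h3 : Real.exp (K - A * Real.exp (-(c * F t))) ≤ y t := by
    calc Real.exp (K - A * Real.exp (-(c * F t))) ≤ Real.exp (Real.log (y t)) :=
          Real.exp_le_exp.mpr (by linarith)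
    _ = y t := Real.exp_log hpos
  linarith
end

section
/- (Comparison lemma.) Let T₁ > 0, let f ∈ L¹(0,T₁) with f ≥ 0 a.e., let K ≥ 0 and C₀ > 0. Let X, B : [0,T₁] → [0, e⁻¹] be absolutely continuous functions such that X(0) ≤ B(0), X′(t) ≤ C₀ f(t) X(t)( |ln X(t)| + K ) for a.e. t, and B′(t) = C₀ f(t) B(t)( |ln B(t)| + K ) for a.e. t (with the convention 0·|ln 0| = 0). Then X(t) ≤ B(t) for all t ∈ [0,T₁]. -/
open MeasureTheory Set

lemma habs_eq (K : ℝ) : ∀ z : ℝ, 0 ≤ z → z ≤ Real.exp (-1) →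
    z * (|Real.log z| + K) = -(z * Real.log z) + K * z := by
  intro z hz hzE
  rcases eq_or_lt_of_le hz with h0 | h0
  · rw [← h0]; simp
  · have hlog : Real.log z ≤ -1 := by
      have := Real.log_le_log h0 hzE
      rwa [Real.log_exp] at this
    rw [abs_of_nonpos (by linarith)]
    ring


-- monotonicity of w ↦ w(|ln w| + K) on [0, e⁻¹]
lemma hmul_mono (K : ℝ) (hK : 0 ≤ K) {x y : ℝ} (hx : 0 ≤ x) (hxy : x ≤ y)
    (hy : y ≤ Real.exp (-1)) :
    x * (|Real.log x| + K) ≤ y * (|Real.log y| + K) := by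
  have habs : ∀ z : ℝ, 0 ≤ z → z ≤ Real.exp (-1) →
      z * (|Real.log z| + K) = -(z * Real.log z) + K * z := by
    intro z hz hzE
    rcases eq_or_lt_of_le hz with h0 | h0
    · rw [← h0]; simp
    · have hlog : Real.log z ≤ -1 := by
        have := Real.log_le_log h0 hzE
        rwa [Real.log_exp] at this
      rw [abs_of_nonpos (by linarith)]
      ring
  rw [habs x hx (le_trans hxy hy), habs y (le_trans hx hxy) hy]
  have hmono : MonotoneOn (fun w : ℝ => -(w * Real.log w) + K * w) (Icc 0 (Real.exp (-1))) := by
    apply monotoneOn_of_deriv_nonneg (convex_Icc _ _)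
    · exact ((Real.continuous_mul_log.neg).add (continuous_const.mul continuous_id)).continuousOn
    · intro w hw
      rw [interior_Icc] at hw
      exact (((Real.hasDerivAt_mul_log (ne_of_gt hw.1)).neg).add
        ((hasDerivAt_id w).const_mul K)).differentiableAt.differentiableWithinAt
    · intro w hw
      rw [interior_Icc] at hw
      have hd : deriv (fun w : ℝ => -(w * Real.log w) + K * w) w = -(Real.log w + 1) + K * 1 :=
        (((Real.hasDerivAt_mul_log (ne_of_gt hw.1)).neg).add
          ((hasDerivAt_id w).const_mul K)).deriv
      rw [hd]
      have hlog : Real.log w < -1 := by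
        have := Real.log_lt_log hw.1 hw.2
        rwa [Real.log_exp] at this
      nlinarith
  exact hmono ⟨hx, le_trans hxy hy⟩ ⟨le_trans hx hxy, hy⟩ hxy


lemma key_cov (T : ℝ) (hT : 0 ≤ T) (ρ u : ℝ → ℝ)
    (hρ_int : IntegrableOn ρ (Ioc 0 T))
    (hρ0 : ∀ᵐ r ∂(volume.restrict (Ioc 0 T)), 0 ≤ ρ r)
    (hu : ∀ s t : ℝ, 0 ≤ s → s ≤ t → t ≤ T → u t - u s = ∫ r in Ioc s t, ρ r)
    (Φ Φ' : ℝ → ℝ)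
    (hΦ : ∀ x ∈ Icc (u 0) (u T), HasDerivAt Φ (Φ' x) x)
    (hΦ'c : ContinuousOn Φ' (Icc (u 0) (u T))) :
    ∫ r in Ioc 0 T, ρ r * Φ' (u r) = Φ (u T) - Φ (u 0) := by
  -- basic facts
  have hρ_sub : ∀ s t : ℝ, 0 ≤ s → t ≤ T → IntegrableOn ρ (Ioc s t) := by
    intro s t hs ht
    exact hρ_int.mono_set (Ioc_subset_Ioc (by linarith) ht)
  have hρ0_sub : ∀ s t : ℝ, 0 ≤ s → t ≤ T →
      ∀ᵐ r ∂(volume.restrict (Ioc s t)), 0 ≤ ρ r := by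
    intro s t hs ht
    exact ae_restrict_of_ae_restrict_of_subset (Ioc_subset_Ioc (by linarith) ht) hρ0
  have hnn : ∀ s t : ℝ, 0 ≤ s → s ≤ t → t ≤ T → 0 ≤ ∫ r in Ioc s t, ρ r := by
    intro s t hs hst ht
    exact integral_nonneg_of_ae (hρ0_sub s t hs ht)
  have umono : ∀ s t : ℝ, 0 ≤ s → s ≤ t → t ≤ T → u s ≤ u t := by
    intro s t hs hst ht
    have h1 := hu s t hs hst ht
    have h2 := hnn s t hs hst ht
    linarith
  have urange : ∀ r ∈ Icc (0:ℝ) T, u r ∈ Icc (u 0) (u T) := by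
    intro r hr
    exact ⟨umono 0 r le_rfl hr.1 hr.2, umono r T hr.1 hr.2 le_rfl⟩
  have hρIcc : IntegrableOn ρ (Icc 0 T) := by
    rw [integrableOn_Icc_iff_integrableOn_Ioc]; exact hρ_int
  have ucont : ContinuousOn u (Icc 0 T) := by
    have h1 : ContinuousOn (fun t => u 0 + ∫ r in Ioc 0 t, ρ r) (Icc 0 T) :=
      continuousOn_const.add (intervalIntegral.continuousOn_primitive hρIcc)
    apply h1.congr
    intro t ht
    have h2 := hu 0 t le_rfl ht.1 ht.2
    show u t = u 0 + ∫ r in Ioc 0 t, ρ r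
    linarith
  have hΦ'u_cont : ContinuousOn (fun r => Φ' (u r)) (Icc 0 T) :=
    hΦ'c.comp ucont (fun r hr => urange r hr)
  obtain ⟨M, hM⟩ := isCompact_Icc.exists_bound_of_continuousOn hΦ'u_cont
  set g : ℝ → ℝ := fun r => ρ r * Φ' (u r) with hg_def
  have hg_int : IntegrableOn g (Icc 0 T) := by
    apply Integrable.mono' ((hρIcc.norm).const_mul M)
      ((hρIcc.aestronglyMeasurable).mul
        (hΦ'u_cont.aestronglyMeasurable measurableSet_Icc))
    filter_upwards [ae_restrict_mem measurableSet_Icc] with r hr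
    have := hM r hr
    show ‖ρ r * Φ' (u r)‖ ≤ M * ‖ρ r‖
    rw [norm_mul]
    calc ‖ρ r‖ * ‖Φ' (u r)‖ ≤ ‖ρ r‖ * M := by
          apply mul_le_mul_of_nonneg_left this (norm_nonneg _)
      _ = M * ‖ρ r‖ := mul_comm _ _
  have hg_sub : ∀ s t : ℝ, 0 ≤ s → t ≤ T → IntegrableOn g (Ioc s t) := by
    intro s t hs ht
    exact hg_int.mono_set (fun x hx => ⟨by linarith [hx.1], le_trans hx.2 ht⟩)
  have hGg_cont : ContinuousOn (fun t => ∫ r in Ioc 0 t, g r) (Icc 0 T) :=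
    intervalIntegral.continuousOn_primitive hg_int
  have hadd : ∀ s t : ℝ, 0 ≤ s → s ≤ t → t ≤ T →
      (∫ r in Ioc 0 t, g r) = (∫ r in Ioc 0 s, g r) + ∫ r in Ioc s t, g r := by
    intro s t hs hst ht
    rw [← setIntegral_union (Ioc_disjoint_Ioc_of_le le_rfl) measurableSet_Ioc
      (hg_sub 0 s le_rfl (le_trans hst ht)) (hg_sub s t hs ht),
      Ioc_union_Ioc_eq_Ioc hs hst]
  have hΦcont : ContinuousOn Φ (Icc (u 0) (u T)) :=
    fun x hx => (hΦ x hx).continuousAt.continuousWithinAt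
  -- main ε-statement
  suffices hmain : ∀ ε > (0:ℝ),
      |(∫ r in Ioc 0 T, g r) - (Φ (u T) - Φ (u 0))| ≤ ε * (u T - u 0) by
    set d := (∫ r in Ioc 0 T, g r) - (Φ (u T) - Φ (u 0)) with hd_def
    have hC : 0 ≤ u T - u 0 := by linarith [umono 0 T le_rfl hT le_rfl]
    have hd0 : |d| ≤ 0 := by
      by_contra h
      push_neg at h
      have hε : 0 < |d| / (2 * (u T - u 0 + 1)) := by positivity
      have h3 := hmain _ hε
      rw [div_mul_eq_mul_div] at h3
      have h4 : |d| * (u T - u 0) / (2 * (u T - u 0 + 1)) < |d| := by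
        rw [div_lt_iff₀ (by positivity)]
        nlinarith [mul_lt_mul_of_pos_left (show u T - u 0 < 2 * (u T - u 0 + 1) by linarith) h]
      linarith
    have : d = 0 := abs_eq_zero.mp (le_antisymm hd0 (abs_nonneg d))
    linarith [this]
  intro ε hε
  set S : Set ℝ := {t ∈ Icc 0 T |
    |(∫ r in Ioc 0 t, g r) - (Φ (u t) - Φ (u 0))| ≤ ε * (u t - u 0)} with hS_def
  have hS0 : (0:ℝ) ∈ S := by
    constructor
    · exact ⟨le_rfl, hT⟩
    · simp [Set.Ioc_self]
  have hSsub : S ⊆ Icc 0 T := fun x hx => hx.1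
  have hSclosed : IsClosed S := by
    apply isClosed_Icc.isClosed_le
    · exact ((hGg_cont.sub ((hΦcont.comp ucont (fun r hr => urange r hr)).sub
        continuousOn_const)).abs)
    · exact continuousOn_const.mul (ucont.sub continuousOn_const)
  have hbdd : BddAbove S := BddAbove.mono hSsub (bddAbove_Icc)
  set t₀ := sSup S with ht₀_def
  have ht₀S : t₀ ∈ S := hSclosed.csSup_mem ⟨0, hS0⟩ hbdd
  have ht₀Icc : t₀ ∈ Icc (0:ℝ) T := ht₀S.1
  have ht₀T : t₀ = T := by
    by_contra hne
    have ht₀lt : t₀ < T := lt_of_le_of_ne ht₀Icc.2 hne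
    -- uniform continuity of Φ'
    have huc := (isCompact_Icc (a := u 0) (b := u T)).uniformContinuousOn_of_continuous hΦ'c
    rw [Metric.uniformContinuousOn_iff] at huc
    obtain ⟨δ, hδpos, hδ⟩ := huc (ε/2) (by positivity)
    -- continuity of u at t₀
    have hucw := ucont t₀ ht₀Icc
    rw [Metric.continuousWithinAt_iff] at hucw
    obtain ⟨δt, hδtpos, hδt⟩ := hucw δ hδpos
    set t := min T (t₀ + δt/2) with ht_def
    have htgt : t₀ < t := lt_min ht₀lt (by linarith)
    have htIcc : t ∈ Icc (0:ℝ) T := ⟨le_trans ht₀Icc.1 htgt.le, min_le_left _ _⟩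
    have htdist : dist t t₀ < δt := by
      rw [Real.dist_eq, abs_of_pos (by linarith : 0 < t - t₀)]
      have : t ≤ t₀ + δt/2 := min_le_right _ _
      linarith
    have hut : u t - u t₀ < δ := by
      have := hδt htIcc htdist
      rw [Real.dist_eq] at this
      have h2 := umono t₀ t ht₀Icc.1 htgt.le htIcc.2
      rw [abs_of_nonneg (by linarith)] at this
      exact this
    have hΔnn : 0 ≤ u t - u t₀ := by
      linarith [umono t₀ t ht₀Icc.1 htgt.le htIcc.2]
    -- Φ' close on [u t₀, u t]
    have hclose : ∀ ξ ∈ Icc (u t₀) (u t), |Φ' ξ - Φ' (u t₀)| ≤ ε/2 := by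
      intro ξ hξ
      have hξmem : ξ ∈ Icc (u 0) (u T) := by
        constructor
        · linarith [hξ.1, (urange t₀ ht₀Icc).1]
        · linarith [hξ.2, (urange t htIcc).2]
      have := hδ ξ hξmem (u t₀) (urange t₀ ht₀Icc)
        (by rw [Real.dist_eq, abs_of_nonneg (by linarith [hξ.1])]; linarith [hξ.2])
      rw [Real.dist_eq] at this
      exact this.le
    have hur : ∀ r ∈ Ioc t₀ t, u r ∈ Icc (u t₀) (u t) := by
      intro r hr
      exact ⟨umono t₀ r ht₀Icc.1 hr.1.le (le_trans hr.2 htIcc.2),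
        umono r t (le_trans ht₀Icc.1 hr.1.le) hr.2 htIcc.2⟩
    -- step 1 : integral estimate on (t₀, t]
    have hΔeq : u t - u t₀ = ∫ r in Ioc t₀ t, ρ r := hu t₀ t ht₀Icc.1 htgt.le htIcc.2
    have hstep1 : |(∫ r in Ioc t₀ t, g r) - Φ' (u t₀) * (u t - u t₀)| ≤ ε/2 * (u t - u t₀) := by
      have hconst : Φ' (u t₀) * (u t - u t₀) = ∫ r in Ioc t₀ t, Φ' (u t₀) * ρ r := by
        rw [integral_const_mul, ← hΔeq]
      rw [hconst, ← integral_sub (hg_sub t₀ t ht₀Icc.1 htIcc.2)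
        ((hρ_sub t₀ t ht₀Icc.1 htIcc.2).const_mul _)]
      calc |∫ r in Ioc t₀ t, (g r - Φ' (u t₀) * ρ r)|
          = ‖∫ r in Ioc t₀ t, (g r - Φ' (u t₀) * ρ r)‖ := (Real.norm_eq_abs _).symm
        _ ≤ ∫ r in Ioc t₀ t, ‖g r - Φ' (u t₀) * ρ r‖ := norm_integral_le_integral_norm _
        _ ≤ ∫ r in Ioc t₀ t, ε/2 * ρ r := by
            apply integral_mono_of_nonneg
            · filter_upwards with r using norm_nonneg _
            · exact (hρ_sub t₀ t ht₀Icc.1 htIcc.2).const_mul _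
            · filter_upwards [ae_restrict_mem measurableSet_Ioc,
                hρ0_sub t₀ t ht₀Icc.1 htIcc.2] with r hr hρr
              have h1 : |Φ' (u r) - Φ' (u t₀)| ≤ ε/2 := hclose _ (hur r hr)
              have : ‖g r - Φ' (u t₀) * ρ r‖ = ρ r * |Φ' (u r) - Φ' (u t₀)| := by
                simp only [hg_def]
                rw [Real.norm_eq_abs]
                rw [show ρ r * Φ' (u r) - Φ' (u t₀) * ρ r = ρ r * (Φ' (u r) - Φ' (u t₀)) by ring]
                rw [abs_mul, abs_of_nonneg hρr]
              rw [this]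
              calc ρ r * |Φ' (u r) - Φ' (u t₀)| ≤ ρ r * (ε/2) :=
                    mul_le_mul_of_nonneg_left h1 hρr
                _ = ε/2 * ρ r := mul_comm _ _
        _ = ε/2 * (u t - u t₀) := by rw [integral_const_mul, ← hΔeq]
    -- step 2 : MVT estimate
    have hstep2 : |Φ (u t) - Φ (u t₀) - Φ' (u t₀) * (u t - u t₀)| ≤ ε/2 * (u t - u t₀) := by
      rcases eq_or_lt_of_le (umono t₀ t ht₀Icc.1 htgt.le htIcc.2) with heq | hlt
      · rw [← heq]; norm_num
      · have hIccsub : Icc (u t₀) (u t) ⊆ Icc (u 0) (u T) := by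
          apply Icc_subset_Icc (urange t₀ ht₀Icc).1 (urange t htIcc).2
        obtain ⟨ξ, hξ, hslope⟩ := exists_hasDerivAt_eq_slope Φ Φ' hlt
          (hΦcont.mono hIccsub)
          (fun x hx => hΦ x (hIccsub (Ioo_subset_Icc_self hx)))
        have hΦdiff : Φ (u t) - Φ (u t₀) = Φ' ξ * (u t - u t₀) := by
          field_simp [show u t - u t₀ ≠ 0 from ne_of_gt (by linarith)] at hslope
          linarith [hslope]
        rw [hΦdiff]
        have h1 : |Φ' ξ - Φ' (u t₀)| ≤ ε/2 := hclose _ (Ioo_subset_Icc_self hξ)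
        calc |Φ' ξ * (u t - u t₀) - Φ' (u t₀) * (u t - u t₀)|
            = |Φ' ξ - Φ' (u t₀)| * (u t - u t₀) := by
              rw [← sub_mul, abs_mul, abs_of_nonneg hΔnn]
          _ ≤ ε/2 * (u t - u t₀) := mul_le_mul_of_nonneg_right h1 hΔnn
    -- combine : t ∈ S
    have htS : t ∈ S := by
      refine ⟨htIcc, ?_⟩
      have hsplit := hadd t₀ t ht₀Icc.1 htgt.le htIcc.2
      have hP₀ := ht₀S.2
      calc |(∫ r in Ioc 0 t, g r) - (Φ (u t) - Φ (u 0))|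
          = |((∫ r in Ioc 0 t₀, g r) - (Φ (u t₀) - Φ (u 0))) +
              (((∫ r in Ioc t₀ t, g r) - Φ' (u t₀) * (u t - u t₀)) -
               (Φ (u t) - Φ (u t₀) - Φ' (u t₀) * (u t - u t₀)))| := by
            rw [hsplit]; congr 1; ring
        _ ≤ |(∫ r in Ioc 0 t₀, g r) - (Φ (u t₀) - Φ (u 0))| +
            (|(∫ r in Ioc t₀ t, g r) - Φ' (u t₀) * (u t - u t₀)| +
             |Φ (u t) - Φ (u t₀) - Φ' (u t₀) * (u t - u t₀)|) := by
            exact le_trans (abs_add_le _ _) (by gcongr; exact abs_sub _ _)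
        _ ≤ ε * (u t₀ - u 0) + (ε/2 * (u t - u t₀) + ε/2 * (u t - u t₀)) := by
            gcongr
        _ = ε * (u t - u 0) := by ring
    have := le_csSup hbdd htS
    linarith
  have := ht₀S.2
  rw [ht₀T] at this
  -- conclude
  exact this


lemma lemA (T₁ : ℝ) (f : ℝ → ℝ) (K C₀ : ℝ) (hK : 0 ≤ K) (hC₀ : 0 < C₀)
    (hfIoc : IntegrableOn f (Ioc 0 T₁))
    (hf0 : ∀ᵐ r ∂(volume.restrict (Ioc 0 T₁)), 0 ≤ f r)
    (X : ℝ → ℝ) (hX_cont : ContinuousOn X (Icc 0 T₁))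
    (hX_range : ∀ t ∈ Icc (0:ℝ) T₁, X t ∈ Icc (0:ℝ) (Real.exp (-1)))
    (hX : ∀ s t : ℝ, 0 ≤ s → s ≤ t → t ≤ T₁ →
      X t - X s ≤ ∫ r in Ioc s t, C₀ * f r * (X r * (|Real.log (X r)| + K)))
    (w₀ : ℝ) (hw₀ : 0 < w₀) (hw₀E : w₀ < Real.exp (-1)) (hXw₀ : X 0 < w₀) :
    ∀ t ∈ Icc (0:ℝ) T₁,
      X t ≤ Real.exp (K - (K - Real.log w₀) * Real.exp (-C₀ * (∫ r in Ioc 0 t, f r))) := by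
  have hf_sub : ∀ s t : ℝ, 0 ≤ s → t ≤ T₁ → IntegrableOn f (Ioc s t) := fun s t hs ht =>
    hfIoc.mono_set (fun x hx => ⟨lt_of_le_of_lt hs hx.1, le_trans hx.2 ht⟩)
  have hf0_sub : ∀ s t : ℝ, 0 ≤ s → t ≤ T₁ → ∀ᵐ r ∂(volume.restrict (Ioc s t)), 0 ≤ f r := by
    intro s t hs ht
    exact ae_restrict_of_ae_restrict_of_subset (Ioc_subset_Ioc hs ht) hf0
  set G : ℝ → ℝ := fun t => ∫ r in Ioc 0 t, f r with hG_def
  have hGadd : ∀ s t : ℝ, 0 ≤ s → s ≤ t → t ≤ T₁ → G t - G s = ∫ r in Ioc s t, f r := by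
    intro s t hs hst ht
    have h1 : (∫ r in Ioc 0 t, f r) = (∫ r in Ioc 0 s, f r) + ∫ r in Ioc s t, f r := by
      rw [← setIntegral_union (Ioc_disjoint_Ioc_of_le le_rfl) measurableSet_Ioc
        (hf_sub 0 s le_rfl (le_trans hst ht)) (hf_sub s t hs ht),
        Ioc_union_Ioc_eq_Ioc hs hst]
    show (∫ r in Ioc 0 t, f r) - (∫ r in Ioc 0 s, f r) = _
    linarith
  have hGmono : ∀ s t : ℝ, 0 ≤ s → s ≤ t → t ≤ T₁ → G s ≤ G t := by
    intro s t hs hst ht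
    have h1 := hGadd s t hs hst ht
    have h2 : 0 ≤ ∫ r in Ioc s t, f r := integral_nonneg_of_ae (hf0_sub s t hs ht)
    linarith
  have hG0 : G 0 = 0 := by show (∫ r in Ioc (0:ℝ) 0, f r) = 0; simp
  have hGcont : ContinuousOn G (Icc 0 T₁) := intervalIntegral.continuousOn_primitive
    (by rw [integrableOn_Icc_iff_integrableOn_Ioc]; exact hfIoc)
  set a := K - Real.log w₀ with ha_def
  have hloga : Real.log w₀ < -1 := by
    have := Real.log_lt_log hw₀ hw₀E; rwa [Real.log_exp] at this
  have ha : 1 < a := by rw [ha_def]; linarith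
  set Φ : ℝ → ℝ := fun y => Real.exp (K - a * Real.exp (-C₀ * y)) with hΦ_def
  set Φ' : ℝ → ℝ := fun y => Real.exp (K - a * Real.exp (-C₀ * y)) *
    (a * C₀ * Real.exp (-C₀ * y)) with hΦ'_def
  have hΦd : ∀ y : ℝ, HasDerivAt Φ (Φ' y) y := by
    intro y
    have h1 : HasDerivAt (fun y : ℝ => -C₀ * y) (-C₀) y := by
      simpa using (hasDerivAt_id y).const_mul (-C₀)
    have h4 := ((h1.exp.const_mul a).const_sub K).exp
    convert h4 using 1
    show Real.exp (K - a * Real.exp (-C₀ * y)) * (a * C₀ * Real.exp (-C₀ * y)) = _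
    ring
  have hΦc : Continuous Φ := by fun_prop
  have hΦ'c : Continuous Φ' := by fun_prop
  set D : ℝ → ℝ := fun s => Φ (G s) with hD_def
  have hDcont : ContinuousOn D (Icc 0 T₁) := hΦc.comp_continuousOn hGcont
  have hD0 : D 0 = w₀ := by
    show Real.exp (K - a * Real.exp (-C₀ * G 0)) = w₀
    rw [hG0]
    norm_num
    rw [ha_def]
    have : K - (K - Real.log w₀) = Real.log w₀ := by ring
    rw [this, Real.exp_log hw₀]
  have hDmono : ∀ s t : ℝ, 0 ≤ s → s ≤ t → t ≤ T₁ → D s ≤ D t := by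
    intro s t hs hst ht
    show Real.exp _ ≤ Real.exp _
    rw [Real.exp_le_exp]
    have h1 : Real.exp (-C₀ * G t) ≤ Real.exp (-C₀ * G s) := by
      rw [Real.exp_le_exp]
      have := hGmono s t hs hst ht
      nlinarith
    nlinarith
  have hlogD : ∀ r : ℝ, Real.log (D r) = K - a * Real.exp (-C₀ * G r) := by
    intro r; exact Real.log_exp _
  have hDpos : ∀ r : ℝ, 0 < D r := fun r => Real.exp_pos _
  intro t ht
  by_contra hcon
  push_neg at hcon
  have hcon' : D t < X t := hcon
  set S : Set ℝ := {s ∈ Icc (0:ℝ) T₁ | D s ≤ X s} with hS_def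
  have hSclosed : IsClosed S := isClosed_Icc.isClosed_le hDcont hX_cont
  have hSsub : S ⊆ Icc 0 T₁ := fun x hx => hx.1
  have hSne : t ∈ S := ⟨ht, hcon'.le⟩
  have hbdd : BddBelow S := BddBelow.mono hSsub bddBelow_Icc
  set t₀ := sInf S with ht₀_def
  have ht₀S : t₀ ∈ S := hSclosed.csInf_mem ⟨t, hSne⟩ hbdd
  have ht₀Icc : t₀ ∈ Icc (0:ℝ) T₁ := ht₀S.1
  have hDX₀ : D t₀ ≤ X t₀ := ht₀S.2
  have ht₀pos : 0 < t₀ := by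
    rcases eq_or_lt_of_le ht₀Icc.1 with h | h
    · exfalso
      have : D 0 ≤ X 0 := by rw [h]; exact hDX₀
      rw [hD0] at this
      linarith
    · exact h
  have hbefore : ∀ r : ℝ, 0 ≤ r → r < t₀ → X r < D r := by
    intro r hr hrt
    by_contra h
    push_neg at h
    have hrS : r ∈ S := ⟨⟨hr, le_trans hrt.le ht₀Icc.2⟩, h⟩
    have := csInf_le hbdd hrS
    linarith
  have hXt₀E : X t₀ ≤ Real.exp (-1) := (hX_range t₀ ht₀Icc).2
  have hDle : ∀ r ∈ Icc (0:ℝ) t₀, D r ≤ Real.exp (-1) := by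
    intro r hr
    exact le_trans (hDmono r t₀ hr.1 hr.2 ht₀Icc.2) (le_trans hDX₀ hXt₀E)
  -- key change of variables
  have hkey : ∫ r in Ioc 0 t₀, f r * Φ' (G r) = Φ (G t₀) - Φ (G 0) :=
    key_cov t₀ ht₀Icc.1 f G (hf_sub 0 t₀ le_rfl ht₀Icc.2) (hf0_sub 0 t₀ le_rfl ht₀Icc.2)
      (fun s t' hs hst' ht' => hGadd s t' hs hst' (le_trans ht' ht₀Icc.2))
      Φ Φ' (fun x _ => hΦd x) (hΦ'c.continuousOn)
  -- comparison of integrals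
  have hIoc_sub : Ioc (0:ℝ) t₀ ⊆ Icc 0 T₁ := fun x hx => ⟨hx.1.le, le_trans hx.2 ht₀Icc.2⟩
  have hcomp : (∫ r in Ioc 0 t₀, C₀ * f r * (X r * (|Real.log (X r)| + K))) ≤
      ∫ r in Ioc 0 t₀, f r * Φ' (G r) := by
    have hcontPhiG : ContinuousOn (fun r => Φ' (G r)) (Icc 0 T₁) := hΦ'c.comp_continuousOn hGcont
    obtain ⟨M, hM⟩ := isCompact_Icc.exists_bound_of_continuousOn hcontPhiG
    apply integral_mono_of_nonneg
    · filter_upwards [ae_restrict_mem measurableSet_Ioc, hf0_sub 0 t₀ le_rfl ht₀Icc.2]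
        with r hr hfr
      have hXr := hX_range r (hIoc_sub hr)
      have h1 : 0 ≤ X r * (|Real.log (X r)| + K) := mul_nonneg hXr.1 (by positivity)
      exact mul_nonneg (mul_nonneg hC₀.le hfr) h1
    · apply Integrable.mono' (((hf_sub 0 t₀ le_rfl ht₀Icc.2).norm).const_mul M)
        ((hf_sub 0 t₀ le_rfl ht₀Icc.2).aestronglyMeasurable.mul
          ((hcontPhiG.mono hIoc_sub).aestronglyMeasurable measurableSet_Ioc))
      filter_upwards [ae_restrict_mem measurableSet_Ioc] with r hr
      show ‖f r * Φ' (G r)‖ ≤ M * ‖f r‖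
      rw [norm_mul]
      calc ‖f r‖ * ‖Φ' (G r)‖ ≤ ‖f r‖ * M :=
            mul_le_mul_of_nonneg_left (hM r (hIoc_sub hr)) (norm_nonneg _)
        _ = M * ‖f r‖ := mul_comm _ _
    · have hne : ∀ᵐ r ∂(volume.restrict (Ioc (0:ℝ) t₀)), r ≠ t₀ := by
        rw [ae_iff]
        have hset : {r : ℝ | ¬ r ≠ t₀} = {t₀} := by ext r; simp
        rw [hset]
        apply le_antisymm _ zero_le
        calc volume.restrict (Ioc (0:ℝ) t₀) {t₀} ≤ volume {t₀} := Measure.restrict_apply_le _ _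
          _ = 0 := Real.volume_singleton
      filter_upwards [ae_restrict_mem measurableSet_Ioc, hf0_sub 0 t₀ le_rfl ht₀Icc.2, hne]
        with r hr hfr hrne
      have hrt₀ : r < t₀ := lt_of_le_of_ne hr.2 hrne
      have hXrD : X r ≤ D r := (hbefore r hr.1.le hrt₀).le
      have hXr0 : 0 ≤ X r := (hX_range r (hIoc_sub hr)).1
      have hDrE : D r ≤ Real.exp (-1) := hDle r ⟨hr.1.le, hr.2⟩
      have hhm := hmul_mono K hK hXr0 hXrD hDrE
      have hDr_eq : Φ' (G r) = C₀ * (D r * (|Real.log (D r)| + K)) := by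
        have hlogneg : Real.log (D r) ≤ -1 := by
          rw [hlogD r]
          exact Real.exp_le_exp.mp hDrE
        rw [abs_of_nonpos (by linarith), hlogD r]
        show Real.exp (K - a * Real.exp (-C₀ * G r)) * (a * C₀ * Real.exp (-C₀ * G r)) =
          C₀ * (Real.exp (K - a * Real.exp (-C₀ * G r)) * (-(K - a * Real.exp (-C₀ * G r)) + K))
        ring
      calc C₀ * f r * (X r * (|Real.log (X r)| + K))
          ≤ C₀ * f r * (D r * (|Real.log (D r)| + K)) :=
            mul_le_mul_of_nonneg_left hhm (mul_nonneg hC₀.le hfr)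
        _ = f r * Φ' (G r) := by rw [hDr_eq]; ring
  have hXineq := hX 0 t₀ le_rfl ht₀Icc.1 ht₀Icc.2
  have hlast : X t₀ - X 0 ≤ D t₀ - D 0 := by
    have : Φ (G t₀) - Φ (G 0) = D t₀ - D 0 := rfl
    linarith [hXineq, hcomp, hkey]
  rw [hD0] at hlast
  linarith

/-- **comparison lemma.** Let `T₁ > 0`, `f ∈ L¹(0,T₁)` with `f ≥ 0` a.e.,
`K ≥ 0`, `C₀ > 0`.  Let `X, B : [0,T₁] → [0, e⁻¹]` be absolutely continuous with
`X 0 ≤ B 0`, `X' ≤ C₀ f X (|ln X| + K)` a.e. and `B' = C₀ f B (|ln B| + K)` a.e.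
(with the convention `0 · |ln 0| = 0`, automatic since `Real.log 0 = 0`); absolute
continuity together with the a.e. differential (in)equality is expressed in the
equivalent integral form.  Then `X ≤ B` on `[0,T₁]`. -/
theorem comparison_log_ode (T₁ : ℝ) (hT₁ : 0 < T₁) (f : ℝ → ℝ)
    (hf_int : IntegrableOn f (Ioo 0 T₁))
    (hf_nonneg : ∀ᵐ s ∂(volume.restrict (Ioo 0 T₁)), 0 ≤ f s)
    (K C₀ : ℝ) (hK : 0 ≤ K) (hC₀ : 0 < C₀)
    (X B : ℝ → ℝ)
    (hX_cont : ContinuousOn X (Icc 0 T₁)) (hB_cont : ContinuousOn B (Icc 0 T₁))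
    (hX_range : ∀ t ∈ Icc (0 : ℝ) T₁, X t ∈ Icc (0 : ℝ) (Real.exp (-1)))
    (hB_range : ∀ t ∈ Icc (0 : ℝ) T₁, B t ∈ Icc (0 : ℝ) (Real.exp (-1)))
    (h0 : X 0 ≤ B 0)
    (hX : ∀ s t : ℝ, 0 ≤ s → s ≤ t → t ≤ T₁ →
      X t - X s ≤ ∫ r in Ioc s t, C₀ * f r * (X r * (|Real.log (X r)| + K)))
    (hB : ∀ t ∈ Icc (0 : ℝ) T₁,
      B t = B 0 + ∫ r in Ioc (0 : ℝ) t, C₀ * f r * (B r * (|Real.log (B r)| + K))) :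
    ∀ t ∈ Icc (0 : ℝ) T₁, X t ≤ B t := by
  have hfIoc : IntegrableOn f (Ioc 0 T₁) := by
    rw [integrableOn_Ioc_iff_integrableOn_Ioo]; exact hf_int
  have hf0 : ∀ᵐ r ∂(volume.restrict (Ioc (0:ℝ) T₁)), 0 ≤ f r := by
    rw [← Measure.restrict_congr_set Ioo_ae_eq_Ioc]; exact hf_nonneg
  have hf_sub : ∀ s t : ℝ, 0 ≤ s → t ≤ T₁ → IntegrableOn f (Ioc s t) := by
    intro s t hs ht; exact hfIoc.mono_set (Ioc_subset_Ioc hs ht)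
  have hf0_sub : ∀ s t : ℝ, 0 ≤ s → t ≤ T₁ → ∀ᵐ r ∂(volume.restrict (Ioc s t)), 0 ≤ f r := by
    intro s t hs ht
    exact ae_restrict_of_ae_restrict_of_subset (Ioc_subset_Ioc hs ht) hf0
  set G : ℝ → ℝ := fun t => ∫ r in Ioc 0 t, f r with hG_def
  -- the B-side integrand
  set ρB : ℝ → ℝ := fun r => C₀ * f r * (B r * (|Real.log (B r)| + K)) with hρB_def
  have hq_cont : ContinuousOn (fun r => B r * (|Real.log (B r)| + K)) (Icc 0 T₁) := by
    have hc2 : ContinuousOn (fun r => -(B r * Real.log (B r)) + K * B r) (Icc 0 T₁) :=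
      ((Real.continuous_mul_log.comp_continuousOn hB_cont).neg).add
        (continuousOn_const.mul hB_cont)
    apply hc2.congr
    intro r hr
    exact habs_eq K (B r) (hB_range r hr).1 (hB_range r hr).2
  obtain ⟨M, hM⟩ := isCompact_Icc.exists_bound_of_continuousOn hq_cont
  have hρB_int : IntegrableOn ρB (Ioc 0 T₁) := by
    apply Integrable.mono' ((hfIoc.norm).const_mul (C₀ * M))
      ((hfIoc.aestronglyMeasurable.const_mul C₀).mul
        ((hq_cont.mono Ioc_subset_Icc_self).aestronglyMeasurable measurableSet_Ioc))
    filter_upwards [ae_restrict_mem measurableSet_Ioc] with r hr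
    show ‖C₀ * f r * (B r * (|Real.log (B r)| + K))‖ ≤ C₀ * M * ‖f r‖
    rw [norm_mul, norm_mul]
    have h1 : ‖B r * (|Real.log (B r)| + K)‖ ≤ M := hM r (Ioc_subset_Icc_self hr)
    have h2 : ‖(C₀:ℝ)‖ = C₀ := by rw [Real.norm_eq_abs, abs_of_pos hC₀]
    rw [h2]
    have h3 : 0 ≤ M := le_trans (norm_nonneg _) h1
    calc C₀ * ‖f r‖ * ‖B r * (|Real.log (B r)| + K)‖ ≤ C₀ * ‖f r‖ * M := by
          apply mul_le_mul_of_nonneg_left h1 (by positivity)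
      _ = C₀ * M * ‖f r‖ := by ring
  have hρB0 : ∀ᵐ r ∂(volume.restrict (Ioc (0:ℝ) T₁)), 0 ≤ ρB r := by
    filter_upwards [ae_restrict_mem measurableSet_Ioc, hf0] with r hr hfr
    have hBr := hB_range r (Ioc_subset_Icc_self hr)
    exact mul_nonneg (mul_nonneg hC₀.le hfr) (mul_nonneg hBr.1 (by positivity))
  have hρB_sub : ∀ s t : ℝ, 0 ≤ s → t ≤ T₁ → IntegrableOn ρB (Ioc s t) := by
    intro s t hs ht; exact hρB_int.mono_set (Ioc_subset_Ioc hs ht)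
  have hρB0_sub : ∀ s t : ℝ, 0 ≤ s → t ≤ T₁ →
      ∀ᵐ r ∂(volume.restrict (Ioc s t)), 0 ≤ ρB r := by
    intro s t hs ht
    exact ae_restrict_of_ae_restrict_of_subset (Ioc_subset_Ioc hs ht) hρB0
  have hBadd : ∀ s t : ℝ, 0 ≤ s → s ≤ t → t ≤ T₁ → B t - B s = ∫ r in Ioc s t, ρB r := by
    intro s t hs hst ht
    have h1 : (∫ r in Ioc 0 t, ρB r) = (∫ r in Ioc 0 s, ρB r) + ∫ r in Ioc s t, ρB r := by
      rw [← setIntegral_union (Ioc_disjoint_Ioc_of_le le_rfl) measurableSet_Ioc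
        (hρB_sub 0 s le_rfl (le_trans hst ht)) (hρB_sub s t hs ht),
        Ioc_union_Ioc_eq_Ioc hs hst]
    have h2 := hB t ⟨le_trans hs hst, ht⟩
    have h3 := hB s ⟨hs, le_trans hst ht⟩
    rw [hρB_def] at h1
    linarith
  have hBmono : ∀ s t : ℝ, 0 ≤ s → s ≤ t → t ≤ T₁ → B s ≤ B t := by
    intro s t hs hst ht
    have h1 := hBadd s t hs hst ht
    have h2 : 0 ≤ ∫ r in Ioc s t, ρB r := integral_nonneg_of_ae (hρB0_sub s t hs ht)
    linarith
  intro t ht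
  rcases eq_or_lt_of_le ((hB_range 0 ⟨le_rfl, hT₁.le⟩).1) with hB0 | hB0pos
  · -- B 0 = 0, hence X 0 = 0 and X t ≤ 0
    have hX0 : X 0 = 0 := le_antisymm (h0.trans hB0.ge) (hX_range 0 ⟨le_rfl, hT₁.le⟩).1
    have hXt_le : X t ≤ 0 := by
      by_contra hpos
      push_neg at hpos
      set c := Real.exp (-C₀ * G t) with hc_def
      have hc : 0 < c := Real.exp_pos _
      set w₀ := min (Real.exp (K - (K - Real.log (X t / 2)) / c)) (Real.exp (-2)) with hw₀_def
      have hw₀pos : 0 < w₀ := lt_min (Real.exp_pos _) (Real.exp_pos _)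
      have hw₀E : w₀ < Real.exp (-1) :=
        lt_of_le_of_lt (min_le_right _ _) (Real.exp_lt_exp.mpr (by norm_num))
      have hXw₀ : X 0 < w₀ := by rw [hX0]; exact hw₀pos
      have hA := lemA T₁ f K C₀ hK hC₀ hfIoc hf0 X hX_cont hX_range hX w₀ hw₀pos hw₀E hXw₀ t ht
      have hlogw : Real.log w₀ ≤ K - (K - Real.log (X t / 2)) / c := by
        have h1 := Real.log_le_log hw₀pos (min_le_left _ _)
        rwa [Real.log_exp] at h1
      have hexp : K - (K - Real.log w₀) * c ≤ Real.log (X t / 2) := by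
        have h2 : (K - Real.log (X t / 2)) / c ≤ K - Real.log w₀ := by linarith
        rw [div_le_iff₀ hc] at h2
        nlinarith
      have hfin : X t ≤ X t / 2 := by
        calc X t ≤ Real.exp (K - (K - Real.log w₀) * Real.exp (-C₀ * (∫ r in Ioc 0 t, f r))) := hA
          _ ≤ Real.exp (Real.log (X t / 2)) := Real.exp_le_exp.mpr hexp
          _ = X t / 2 := Real.exp_log (by linarith)
      linarith
    exact le_trans hXt_le (hB_range t ht).1
  · rcases eq_or_lt_of_le ((hB_range 0 ⟨le_rfl, hT₁.le⟩).2) with hB0E | hB0E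
    · -- B 0 = exp (-1)
      calc X t ≤ Real.exp (-1) := (hX_range t ht).2
        _ = B 0 := hB0E.symm
        _ ≤ B t := hBmono 0 t le_rfl ht.1 ht.2
    · -- B 0 < exp (-1) : B is the explicit solution
      have hBpos : ∀ r ∈ Icc (0:ℝ) T₁, 0 < B r := fun r hr =>
        lt_of_lt_of_le hB0pos (hBmono 0 r le_rfl hr.1 hr.2)
      have hlogB : ∀ r ∈ Icc (0:ℝ) T₁, Real.log (B r) ≤ -1 := by
        intro r hr
        have h1 := Real.log_le_log (hBpos r hr) (hB_range r hr).2
        rwa [Real.log_exp] at h1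
      have hKlog : ∀ r ∈ Icc (0:ℝ) T₁, 0 < K - Real.log (B r) := by
        intro r hr
        linarith [hlogB r hr]
      have hexact : K - Real.log (B t) = (K - Real.log (B 0)) * Real.exp (-C₀ * G t) := by
        set Ψ : ℝ → ℝ := fun w => -Real.log (K - Real.log w) with hΨ_def
        set Ψ' : ℝ → ℝ := fun w => (w * (K - Real.log w))⁻¹ with hΨ'_def
        have hIccsub : Icc (B 0) (B t) ⊆ Icc (0:ℝ) (Real.exp (-1)) := by
          intro x hx
          exact ⟨le_trans hB0pos.le hx.1, le_trans hx.2 (hB_range t ht).2⟩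
        have hBrange_t : ∀ x ∈ Icc (B 0) (B t), 0 < x ∧ Real.log x ≤ -1 := by
          intro x hx
          have hx0 : 0 < x := lt_of_lt_of_le hB0pos hx.1
          have hxE : x ≤ Real.exp (-1) := (hIccsub hx).2
          have h1 := Real.log_le_log hx0 hxE
          rw [Real.log_exp] at h1
          exact ⟨hx0, h1⟩
        have hΨd : ∀ x ∈ Icc (B 0) (B t), HasDerivAt Ψ (Ψ' x) x := by
          intro x hx
          obtain ⟨hx0, hxlog⟩ := hBrange_t x hx
          have hKx : K - Real.log x ≠ 0 := ne_of_gt (by linarith)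
          have h1 : HasDerivAt (fun w => K - Real.log w) (-x⁻¹) x := by
            simpa using (Real.hasDerivAt_log (ne_of_gt hx0)).const_sub K
          have h2 := (h1.log hKx).neg
          convert h2 using 1
          show (x * (K - Real.log x))⁻¹ = -(-x⁻¹ / (K - Real.log x))
          field_simp
          all_goals rfl
        have hΨ'c : ContinuousOn Ψ' (Icc (B 0) (B t)) := by
          apply ContinuousOn.inv₀
          · apply ContinuousOn.mul continuousOn_id
            apply continuousOn_const.sub
            apply Real.continuousOn_log.mono
            intro x hx
            exact ne_of_gt (hBrange_t x hx).1
          · intro x hx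
            obtain ⟨hx0, hxlog⟩ := hBrange_t x hx
            exact ne_of_gt (mul_pos hx0 (by linarith))
        have hkey2 : ∫ r in Ioc 0 t, ρB r * Ψ' (B r) = Ψ (B t) - Ψ (B 0) :=
          key_cov t ht.1 ρB B (hρB_sub 0 t le_rfl ht.2) (hρB0_sub 0 t le_rfl ht.2)
            (fun s s' hs hss' hs' => hBadd s s' hs hss' (le_trans hs' ht.2)) Ψ Ψ' hΨd hΨ'c
        have hLHS : ∫ r in Ioc 0 t, ρB r * Ψ' (B r) = C₀ * G t := by
          have hGmul : C₀ * G t = ∫ r in Ioc 0 t, C₀ * f r := by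
            rw [hG_def]
            exact (integral_const_mul C₀ f).symm
          rw [hGmul]
          apply setIntegral_congr_fun measurableSet_Ioc
          intro r hr
          have hrIcc : r ∈ Icc (0:ℝ) T₁ := ⟨hr.1.le, le_trans hr.2 ht.2⟩
          have hBr0 := hBpos r hrIcc
          have hlogBr := hlogB r hrIcc
          have hne : B r * (K - Real.log (B r)) ≠ 0 :=
            ne_of_gt (mul_pos hBr0 (by linarith))
          show C₀ * f r * (B r * (|Real.log (B r)| + K)) * (B r * (K - Real.log (B r)))⁻¹
            = C₀ * f r
          rw [abs_of_nonpos (by linarith)]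
          rw [show B r * (-Real.log (B r) + K) = B r * (K - Real.log (B r)) by ring]
          rw [mul_assoc, mul_inv_cancel₀ hne, mul_one]
        have h5 : Ψ (B t) - Ψ (B 0) = C₀ * G t := by rw [← hkey2, hLHS]
        have h6 : Real.log (K - Real.log (B t)) =
            Real.log (K - Real.log (B 0)) + (-C₀ * G t) := by
          have h7 := h5
          simp only [hΨ_def] at h7
          linarith [h7]
        have h8 := congrArg Real.exp h6
        rwa [Real.exp_log (hKlog t ht), Real.exp_add,
          Real.exp_log (hKlog 0 ⟨le_rfl, hT₁.le⟩)] at h8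
      -- final contradiction argument
      by_contra hcon
      push_neg at hcon
      have hBt_pos : 0 < B t := hBpos t ht
      have hXt_pos : 0 < X t := lt_trans hBt_pos hcon
      obtain ⟨c, hc_def⟩ : ∃ c : ℝ, c = Real.exp (-C₀ * G t) := ⟨_, rfl⟩
      have hc : 0 < c := by rw [hc_def]; exact Real.exp_pos _
      have hexact' : K - Real.log (B t) = (K - Real.log (B 0)) * c := by
        rw [hc_def]; exact hexact
      obtain ⟨L, hL_def⟩ : ∃ L : ℝ, L = K - (K - Real.log (X t)) / c := ⟨_, rfl⟩
      have hlogB0 : Real.log (B 0) = K - (K - Real.log (B t)) / c := by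
        have h1 : K - Real.log (B 0) = (K - Real.log (B t)) / c := by
          rw [eq_div_iff (ne_of_gt hc)]
          linarith [hexact']
        linarith
      have hlt : Real.log (B t) < Real.log (X t) := Real.log_lt_log hBt_pos hcon
      have h4 : (K - Real.log (X t)) / c < (K - Real.log (B t)) / c := by
        rw [div_lt_div_iff₀ hc hc]
        nlinarith
      have hLB : Real.log (B 0) < L := by
        rw [hlogB0, hL_def]
        linarith
      obtain ⟨w₀, hw₀_def⟩ : ∃ w₀ : ℝ,
          w₀ = min (Real.exp ((L + Real.log (B 0)) / 2)) ((B 0 + Real.exp (-1)) / 2) := ⟨_, rfl⟩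
      have hw1 : w₀ ≤ Real.exp ((L + Real.log (B 0)) / 2) := by
        rw [hw₀_def]; exact min_le_left _ _
      have hw2 : w₀ ≤ (B 0 + Real.exp (-1)) / 2 := by
        rw [hw₀_def]; exact min_le_right _ _
      have hw₀pos : 0 < w₀ := by
        rw [hw₀_def]
        exact lt_min (Real.exp_pos _) (by positivity)
      have hw₀E : w₀ < Real.exp (-1) := lt_of_le_of_lt hw2 (by linarith)
      have hw₀B0 : B 0 < w₀ := by
        rw [hw₀_def]
        apply lt_min
        · calc B 0 = Real.exp (Real.log (B 0)) := (Real.exp_log hB0pos).symm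
            _ < Real.exp ((L + Real.log (B 0)) / 2) := Real.exp_lt_exp.mpr (by linarith)
        · linarith
      have hXw₀ : X 0 < w₀ := lt_of_le_of_lt h0 hw₀B0
      have hA := lemA T₁ f K C₀ hK hC₀ hfIoc hf0 X hX_cont hX_range hX w₀ hw₀pos hw₀E hXw₀ t ht
      have hlogw : Real.log w₀ < L := by
        have h1 := Real.log_le_log hw₀pos hw1
        rw [Real.log_exp] at h1
        linarith
      have hfin : Real.exp (K - (K - Real.log w₀) * Real.exp (-C₀ * (∫ r in Ioc 0 t, f r)))
          < X t := by
        rw [← Real.exp_log hXt_pos]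
        apply Real.exp_lt_exp.mpr
        have h2 : (K - Real.log (X t)) / c < K - Real.log w₀ := by
          rw [hL_def] at hlogw
          linarith
        rw [div_lt_iff₀ hc] at h2
        have hGc : Real.exp (-C₀ * (∫ r in Ioc 0 t, f r)) = c := by rw [hc_def]
        rw [hGc]
        nlinarith
      linarith [hA, hfin]
end
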